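/- If G is a graph with treewidth at most 2 and σ is any signature on E(G), then the graph whose vertex set is V(G) and whose edges are all pairs {x,y} such that either xy ∈ E(G), or d_G(x,y) = 2 and some xy-path of length 2 has negative sign product, has chromatic number at most 7. -/

import Mathlib

open SimpleGraph

/-- The number of negative edges of a walk, where `σ e = true` means edge `e` is negative. -/
def negCount {V : Type} {G : SimpleGraph V} (σ : Sym2 V → Bool) {x y : V}
    (p : G.Walk x y) : ℕ :=
  (p.edges.filter (fun e => σ e)).length

/-- A walk is negative if it contains an odd number of negative edges. -/
def IsNegWalk {V : Type} {G : SimpleGraph V} (σ : Sym2 V → Bool) {x y : V}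
    (p : G.Walk x y) : Prop :=
  Odd (negCount σ p)

/-- The exact-distance `-k` graph of the signed graph `(G, σ)`:
`xy` is an edge iff `d_G(x,y) = k` and every `xy`-path of length `k` is negative. -/
def exactDistNeg {V : Type} (G : SimpleGraph V) (σ : Sym2 V → Bool) (k : ℕ) :
    SimpleGraph V :=
  SimpleGraph.fromRel (fun x y =>
    G.dist x y = k ∧ ∀ p : G.Walk x y, p.IsPath → p.length = k → IsNegWalk σ p)

/-- The strong exact-distance `-k` graph of the signed graph `(G, σ)`:
`xy` is an edge iff `d_G(x,y) = k` and some `xy`-path of length `k` is negative. -/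
def strongExactDistNeg {V : Type} (G : SimpleGraph V) (σ : Sym2 V → Bool) (k : ℕ) :
    SimpleGraph V :=
  SimpleGraph.fromRel (fun x y =>
    G.dist x y = k ∧ ∃ p : G.Walk x y, p.IsPath ∧ p.length = k ∧ IsNegWalk σ p)

/-- `WReach G L k y` : the set of vertices weakly `k`-reachable from `y` w.r.t. ordering `L`. -/
def WReach {V : Type} (G : SimpleGraph V) (L : LinearOrder V) (k : ℕ) (y : V) : Set V :=
  {x | ∃ p : G.Walk x y, p.IsPath ∧ p.length ≤ k ∧ ∀ z ∈ p.support, L.le x z}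

/-- The weak `k`-colouring number of `G`. -/
noncomputable def wcol {V : Type} (G : SimpleGraph V) (k : ℕ) : ℕ :=
  ⨅ L : LinearOrder V, ⨆ y : V, (WReach G L k y).ncard

/-- `DReach G L k y` : the set of vertices `x` such that there is an `xy`-path
`z_0, …, z_s` (`x = z_0`, `y = z_s`) of length `s ≤ k` on which `x` is the `L`-minimum
and `y ≤_L z_i` for all `⌊k/2⌋ + 1 ≤ i ≤ s`. -/
def DReach {V : Type} (G : SimpleGraph V) (L : LinearOrder V) (k : ℕ) (y : V) : Set V :=
  {x | ∃ p : G.Walk x y, p.IsPath ∧ p.length ≤ k ∧ (∀ z ∈ p.support, L.le x z) ∧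
        ∀ i, k / 2 + 1 ≤ i → i ≤ p.length → L.le y (p.support.getD i y)}

/-- The distance-`k`-colouring number of `G`. -/
noncomputable def dcol {V : Type} (G : SimpleGraph V) (k : ℕ) : ℕ :=
  ⨅ L : LinearOrder V, ⨆ y : V, (DReach G L k y).ncard

/-- `SReach G L k y` : the set of vertices strongly `k`-reachable from `y` w.r.t. `L`. -/
def SReach {V : Type} (G : SimpleGraph V) (L : LinearOrder V) (k : ℕ) (y : V) : Set V :=
  {x | ∃ p : G.Walk x y, p.IsPath ∧ p.length ≤ k ∧ (∀ z ∈ p.support, L.le x z) ∧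
        ∀ z ∈ p.support, z ≠ x → L.le y z}

/-- The strong `k`-colouring number of `G`. -/
noncomputable def scol {V : Type} (G : SimpleGraph V) (k : ℕ) : ℕ :=
  ⨅ L : LinearOrder V, ⨆ y : V, (SReach G L k y).ncard

/-- `H` is a minor of `G` (branch-set definition). -/
def IsMinor {W V : Type} (H : SimpleGraph W) (G : SimpleGraph V) : Prop :=
  ∃ B : W → Set V,
    (∀ w, (B w).Nonempty) ∧
    (∀ w, (G.induce (B w)).Connected) ∧
    (Pairwise (Function.onFun Disjoint B)) ∧
    ∀ w w', H.Adj w w' → ∃ u ∈ B w, ∃ v ∈ B w', G.Adj u v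

/-- `G` is planar iff it has no `K₅` and no `K₃,₃` minor (Wagner's theorem). -/
def IsPlanar {V : Type} (G : SimpleGraph V) : Prop :=
  ¬ IsMinor (completeGraph (Fin 5)) G ∧
  ¬ IsMinor (completeBipartiteGraph (Fin 3) (Fin 3)) G

/-- `G` is outerplanar iff it has no `K₄` and no `K₂,₃` minor. -/
def IsOuterplanar {V : Type} (G : SimpleGraph V) : Prop :=
  ¬ IsMinor (completeGraph (Fin 4)) G ∧
  ¬ IsMinor (completeBipartiteGraph (Fin 2) (Fin 3)) G

/-- `G` has treewidth at most `t` (tree-decomposition definition). -/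
def HasTreewidthLE {V : Type} (G : SimpleGraph V) (t : ℕ) : Prop :=
  ∃ (ι : Type) (T : SimpleGraph ι) (B : ι → Finset V),
    T.Connected ∧ T.IsAcyclic ∧
    (∀ v, ∃ i, v ∈ B i) ∧
    (∀ u v, G.Adj u v → ∃ i, u ∈ B i ∧ v ∈ B i) ∧
    (∀ v, (T.induce {i | v ∈ B i}).Connected) ∧
    (∀ i, (B i).card ≤ t + 1)
/-! ### Auxiliary combinatorial development -/

namespace TwAux

/-- Build an equivalence of `Fin 7` from explicit data. -/
def mkE (f g : Fin 7 → Fin 7) (h1 : ∀ x, g (f x) = x) (h2 : ∀ x, f (g x) = x) :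
    Fin 7 ≃ Fin 7 := ⟨f, g, h1, h2⟩

def ptt1 : Fin 7 ≃ Fin 7 := mkE ![4,0,3,5,1,2,6] ![1,4,5,2,0,3,6] (by decide) (by decide)
def ptt2 : Fin 7 ≃ Fin 7 := mkE ![4,1,2,5,0,3,6] ![4,1,2,5,0,3,6] (by decide) (by decide)
def ptn1 : Fin 7 ≃ Fin 7 := mkE ![3,0,1,5,4,2,6] ![1,2,5,0,4,3,6] (by decide) (by decide)
def ptn2 : Fin 7 ≃ Fin 7 := mkE ![3,1,5,2,6,0,4] ![5,1,3,0,6,2,4] (by decide) (by decide)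
def pnt1 : Fin 7 ≃ Fin 7 := mkE ![2,0,5,3,6,1,4] ![1,5,0,3,6,2,4] (by decide) (by decide)
def pnt2 : Fin 7 ≃ Fin 7 := mkE ![2,1,0,5,4,3,6] ![2,1,0,5,4,3,6] (by decide) (by decide)
def pnn1 : Fin 7 ≃ Fin 7 := mkE ![5,0,2,1,6,3,4] ![1,3,2,5,6,0,4] (by decide) (by decide)
def pnn2 : Fin 7 ≃ Fin 7 := mkE ![5,1,3,0,6,2,4] ![3,1,5,2,6,0,4] (by decide) (by decide)
def pswap : Fin 7 ≃ Fin 7 := mkE ![1,0,3,2,4,5,6] ![1,0,3,2,4,5,6] (by decide) (by decide)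
def ptau : Fin 7 ≃ Fin 7 := mkE ![0,2,1,5,6,3,4] ![0,2,1,5,6,3,4] (by decide) (by decide)

/-- The structural invariant carried along every edge of the (completed) graph:
there is a labelling `e` of the seven colours so that the data looks like the
canonical configuration. -/
def Str (c1 c2 : Fin 7) (A B C D : Finset (Fin 7)) : Prop :=
  ∃ e : Fin 7 ≃ Fin 7, c1 = e 0 ∧ c2 = e 1 ∧
    A = ({1,3,4} : Finset (Fin 7)).image ⇑e ∧
    B = ({2,5,6} : Finset (Fin 7)).image ⇑e ∧
    C = ({0,2,4} : Finset (Fin 7)).image ⇑e ∧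
    D = ({3,5,6} : Finset (Fin 7)).image ⇑e

/-- The per-vertex invariant: the colour together with a balanced partition of
the remaining six colours into the two sign classes. -/
def VertInv (c : Fin 7) (P : Bool → Finset (Fin 7)) : Prop :=
  ∃ e : Fin 7 ≃ Fin 7, c = e 0 ∧
    P true = ({1,3,4} : Finset (Fin 7)).image ⇑e ∧
    P false = ({2,5,6} : Finset (Fin 7)).image ⇑e

lemma str_intro (e π : Fin 7 ≃ Fin 7) {c1 c2 : Fin 7} {A B C D : Finset (Fin 7)}
    (h1 : c1 = e (π 0)) (h2 : c2 = e (π 1))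
    (hA : A = (({1,3,4} : Finset (Fin 7)).image ⇑π).image ⇑e)
    (hB : B = (({2,5,6} : Finset (Fin 7)).image ⇑π).image ⇑e)
    (hC : C = (({0,2,4} : Finset (Fin 7)).image ⇑π).image ⇑e)
    (hD : D = (({3,5,6} : Finset (Fin 7)).image ⇑π).image ⇑e) :
    Str c1 c2 A B C D :=
  ⟨π.trans e, h1, h2,
    by rw [hA, Finset.image_image]; rfl,
    by rw [hB, Finset.image_image]; rfl,
    by rw [hC, Finset.image_image]; rfl,
    by rw [hD, Finset.image_image]; rfl⟩

lemma Str.mem_A {c1 c2 : Fin 7} {A B C D : Finset (Fin 7)} (h : Str c1 c2 A B C D) :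
    c2 ∈ A := by
  obtain ⟨e, -, h2, hA, -, -, -⟩ := h
  rw [h2, hA]
  exact Finset.mem_image_of_mem _ (by decide)

lemma Str.mem_C {c1 c2 : Fin 7} {A B C D : Finset (Fin 7)} (h : Str c1 c2 A B C D) :
    c1 ∈ C := by
  obtain ⟨e, h1, -, -, -, hC, -⟩ := h
  rw [h1, hC]
  exact Finset.mem_image_of_mem _ (by decide)

lemma Str.ne {c1 c2 : Fin 7} {A B C D : Finset (Fin 7)} (h : Str c1 c2 A B C D) :
    c1 ≠ c2 := by
  obtain ⟨e, h1, h2, -⟩ := h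
  rw [h1, h2, Ne, e.injective.eq_iff]
  decide

lemma VertInv.disjoint {c : Fin 7} {P : Bool → Finset (Fin 7)} (h : VertInv c P) :
    Disjoint (P true) (P false) := by
  obtain ⟨e, -, hT, hF⟩ := h
  rw [hT, hF, Finset.disjoint_image e.injective]
  decide

lemma vertInv_of_str {c1 c2 : Fin 7} {A B C D : Finset (Fin 7)} (h : Str c1 c2 A B C D) :
    VertInv c1 (fun s => cond s A B) := by
  obtain ⟨e, h1, -, hA, hB, -, -⟩ := h
  exact ⟨e, h1, hA, hB⟩

lemma vertInv_of_str' {c1 c2 : Fin 7} {A B C D : Finset (Fin 7)} (h : Str c1 c2 A B C D) :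
    VertInv c1 (fun s => cond s B A) := by
  obtain ⟨e, h1, -, hA, hB, -, -⟩ := h
  refine ⟨ptau.trans e, h1.trans (congrArg e (by decide)), ?_, ?_⟩
  · show B = _
    rw [hB, show ({1,3,4} : Finset (Fin 7)).image ⇑(ptau.trans e)
        = (({1,3,4} : Finset (Fin 7)).image ⇑ptau).image ⇑e from by
      rw [Finset.image_image]; rfl]
    exact congrArg (Finset.image ⇑e) (by decide)
  · show A = _
    rw [hA, show ({2,5,6} : Finset (Fin 7)).image ⇑(ptau.trans e)
        = (({2,5,6} : Finset (Fin 7)).image ⇑ptau).image ⇑e from by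
      rw [Finset.image_image]; rfl]
    exact congrArg (Finset.image ⇑e) (by decide)

lemma Str.swap {c1 c2 : Fin 7} {A B C D : Finset (Fin 7)} (h : Str c1 c2 A B C D) :
    Str c2 c1 C D A B := by
  obtain ⟨e, h1, h2, hA, hB, hC, hD⟩ := h
  exact str_intro e pswap (h2.trans (congrArg e (by decide)))
    (h1.trans (congrArg e (by decide)))
    (hC.trans (congrArg (Finset.image ⇑e) (by decide)))
    (hD.trans (congrArg (Finset.image ⇑e) (by decide)))
    (hA.trans (congrArg (Finset.image ⇑e) (by decide)))
    (hB.trans (congrArg (Finset.image ⇑e) (by decide)))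

lemma step_tt {c1 c2 : Fin 7} {A B C D : Finset (Fin 7)} (h : Str c1 c2 A B C D) :
    ∃ cv A' B', Str cv c1 A' B' A B ∧ Str cv c2 A' B' C D := by
  obtain ⟨e, h1, h2, hA, hB, hC, hD⟩ := h
  refine ⟨e 4, ({0,1,5} : Finset (Fin 7)).image ⇑e, ({2,3,6} : Finset (Fin 7)).image ⇑e, ?_, ?_⟩
  · exact str_intro e ptt1 (congrArg e (by decide)) (h1.trans (congrArg e (by decide)))
      (congrArg (Finset.image ⇑e) (by decide)) (congrArg (Finset.image ⇑e) (by decide))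
      (hA.trans (congrArg (Finset.image ⇑e) (by decide)))
      (hB.trans (congrArg (Finset.image ⇑e) (by decide)))
  · exact str_intro e ptt2 (congrArg e (by decide)) (h2.trans (congrArg e (by decide)))
      (congrArg (Finset.image ⇑e) (by decide)) (congrArg (Finset.image ⇑e) (by decide))
      (hC.trans (congrArg (Finset.image ⇑e) (by decide)))
      (hD.trans (congrArg (Finset.image ⇑e) (by decide)))

lemma step_tn {c1 c2 : Fin 7} {A B C D : Finset (Fin 7)} (h : Str c1 c2 A B C D) :
    ∃ cv A' B', Str cv c1 A' B' A B ∧ Str cv c2 B' A' D C := by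
  obtain ⟨e, h1, h2, hA, hB, hC, hD⟩ := h
  refine ⟨e 3, ({0,4,5} : Finset (Fin 7)).image ⇑e, ({1,2,6} : Finset (Fin 7)).image ⇑e, ?_, ?_⟩
  · exact str_intro e ptn1 (congrArg e (by decide)) (h1.trans (congrArg e (by decide)))
      (congrArg (Finset.image ⇑e) (by decide)) (congrArg (Finset.image ⇑e) (by decide))
      (hA.trans (congrArg (Finset.image ⇑e) (by decide)))
      (hB.trans (congrArg (Finset.image ⇑e) (by decide)))
  · exact str_intro e ptn2 (congrArg e (by decide)) (h2.trans (congrArg e (by decide)))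
      (congrArg (Finset.image ⇑e) (by decide)) (congrArg (Finset.image ⇑e) (by decide))
      (hD.trans (congrArg (Finset.image ⇑e) (by decide)))
      (hC.trans (congrArg (Finset.image ⇑e) (by decide)))

lemma step_nt {c1 c2 : Fin 7} {A B C D : Finset (Fin 7)} (h : Str c1 c2 A B C D) :
    ∃ cv A' B', Str cv c1 A' B' B A ∧ Str cv c2 B' A' C D := by
  obtain ⟨e, h1, h2, hA, hB, hC, hD⟩ := h
  refine ⟨e 2, ({0,3,6} : Finset (Fin 7)).image ⇑e, ({1,4,5} : Finset (Fin 7)).image ⇑e, ?_, ?_⟩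
  · exact str_intro e pnt1 (congrArg e (by decide)) (h1.trans (congrArg e (by decide)))
      (congrArg (Finset.image ⇑e) (by decide)) (congrArg (Finset.image ⇑e) (by decide))
      (hB.trans (congrArg (Finset.image ⇑e) (by decide)))
      (hA.trans (congrArg (Finset.image ⇑e) (by decide)))
  · exact str_intro e pnt2 (congrArg e (by decide)) (h2.trans (congrArg e (by decide)))
      (congrArg (Finset.image ⇑e) (by decide)) (congrArg (Finset.image ⇑e) (by decide))
      (hC.trans (congrArg (Finset.image ⇑e) (by decide)))
      (hD.trans (congrArg (Finset.image ⇑e) (by decide)))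

lemma step_nn {c1 c2 : Fin 7} {A B C D : Finset (Fin 7)} (h : Str c1 c2 A B C D) :
    ∃ cv A' B', Str cv c1 A' B' B A ∧ Str cv c2 A' B' D C := by
  obtain ⟨e, h1, h2, hA, hB, hC, hD⟩ := h
  refine ⟨e 5, ({0,1,6} : Finset (Fin 7)).image ⇑e, ({2,3,4} : Finset (Fin 7)).image ⇑e, ?_, ?_⟩
  · exact str_intro e pnn1 (congrArg e (by decide)) (h1.trans (congrArg e (by decide)))
      (congrArg (Finset.image ⇑e) (by decide)) (congrArg (Finset.image ⇑e) (by decide))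
      (hB.trans (congrArg (Finset.image ⇑e) (by decide)))
      (hA.trans (congrArg (Finset.image ⇑e) (by decide)))
  · exact str_intro e pnn2 (congrArg e (by decide)) (h2.trans (congrArg e (by decide)))
      (congrArg (Finset.image ⇑e) (by decide)) (congrArg (Finset.image ⇑e) (by decide))
      (hD.trans (congrArg (Finset.image ⇑e) (by decide)))
      (hC.trans (congrArg (Finset.image ⇑e) (by decide)))

lemma STEP2 {c1 c2 : Fin 7} {P1 P2 : Bool → Finset (Fin 7)} (t sa sb : Bool)
    (h : Str c1 c2 (P1 t) (P1 (!t)) (P2 t) (P2 (!t))) :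
    ∃ cv Pv, Str cv c1 (Pv sa) (Pv (!sa)) (P1 sa) (P1 (!sa)) ∧
      Str cv c2 (Pv sb) (Pv (!sb)) (P2 sb) (P2 (!sb)) ∧ VertInv cv Pv := by
  cases t <;> cases sa <;> cases sb
  · obtain ⟨cv, A', B', hx, hy⟩ := step_tt h
    exact ⟨cv, fun s => cond s B' A', hx, hy, vertInv_of_str' hx⟩
  · obtain ⟨cv, A', B', hx, hy⟩ := step_tn h
    exact ⟨cv, fun s => cond s B' A', hx, hy, vertInv_of_str' hx⟩
  · obtain ⟨cv, A', B', hx, hy⟩ := step_nt h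
    exact ⟨cv, fun s => cond s A' B', hx, hy, vertInv_of_str hx⟩
  · obtain ⟨cv, A', B', hx, hy⟩ := step_nn h
    exact ⟨cv, fun s => cond s A' B', hx, hy, vertInv_of_str hx⟩
  · obtain ⟨cv, A', B', hx, hy⟩ := step_nn h
    exact ⟨cv, fun s => cond s B' A', hx, hy, vertInv_of_str' hx⟩
  · obtain ⟨cv, A', B', hx, hy⟩ := step_nt h
    exact ⟨cv, fun s => cond s B' A', hx, hy, vertInv_of_str' hx⟩
  · obtain ⟨cv, A', B', hx, hy⟩ := step_tn h
    exact ⟨cv, fun s => cond s A' B', hx, hy, vertInv_of_str hx⟩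
  · obtain ⟨cv, A', B', hx, hy⟩ := step_tt h
    exact ⟨cv, fun s => cond s A' B', hx, hy, vertInv_of_str hx⟩

lemma STEP1 {c1 : Fin 7} {P1 : Bool → Finset (Fin 7)} (s : Bool) (h : VertInv c1 P1) :
    ∃ cv Pv, Str cv c1 (Pv s) (Pv (!s)) (P1 s) (P1 (!s)) ∧ VertInv cv Pv := by
  obtain ⟨e, h1, hT, hF⟩ := h
  cases s
  · have hx : Str (e 5) c1 (({0,1,6} : Finset (Fin 7)).image ⇑e)
        (({2,3,4} : Finset (Fin 7)).image ⇑e) (P1 false) (P1 true) :=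
      str_intro e pnn1 (congrArg e (by decide)) (h1.trans (congrArg e (by decide)))
        (congrArg (Finset.image ⇑e) (by decide)) (congrArg (Finset.image ⇑e) (by decide))
        (hF.trans (congrArg (Finset.image ⇑e) (by decide)))
        (hT.trans (congrArg (Finset.image ⇑e) (by decide)))
    exact ⟨e 5, fun b => cond b (({2,3,4} : Finset (Fin 7)).image ⇑e)
      (({0,1,6} : Finset (Fin 7)).image ⇑e), hx, vertInv_of_str' hx⟩
  · have hx : Str (e 1) c1 (({0,2,4} : Finset (Fin 7)).image ⇑e)
        (({3,5,6} : Finset (Fin 7)).image ⇑e) (P1 true) (P1 false) :=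
      str_intro e pswap (congrArg e (by decide)) (h1.trans (congrArg e (by decide)))
        (congrArg (Finset.image ⇑e) (by decide)) (congrArg (Finset.image ⇑e) (by decide))
        (hT.trans (congrArg (Finset.image ⇑e) (by decide)))
        (hF.trans (congrArg (Finset.image ⇑e) (by decide)))
    exact ⟨e 1, fun b => cond b (({0,2,4} : Finset (Fin 7)).image ⇑e)
      (({3,5,6} : Finset (Fin 7)).image ⇑e), hx, vertInv_of_str hx⟩

lemma STEP0 : ∃ (c : Fin 7) (P : Bool → Finset (Fin 7)), VertInv c P :=
  ⟨0, fun b => cond b ({1,3,4} : Finset (Fin 7)) ({2,5,6} : Finset (Fin 7)),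
    ⟨Equiv.refl _, rfl, by simp, by simp⟩⟩

end TwAux
namespace TwAux

section TreeLemmas

variable {ι : Type} {T : SimpleGraph ι}

lemma isPath_append {a b c : ι} {p : T.Walk a b} {q : T.Walk b c}
    (hp : p.IsPath) (hq : q.IsPath) (h : ∀ x, x ∈ p.support → x ∈ q.support → x = b) :
    (p.append q).IsPath := by
  rw [SimpleGraph.Walk.isPath_def, SimpleGraph.Walk.support_append]
  refine List.Nodup.append hp.support_nodup hq.support_nodup.tail ?_
  intro x hx1 hx2
  have hxq : x ∈ q.support := List.mem_of_mem_tail hx2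
  have hxb : x = b := h x hx1 hxq
  subst hxb
  have hnd := hq.support_nodup
  rw [SimpleGraph.Walk.support_eq_cons] at hnd
  exact (List.nodup_cons.mp hnd).1 hx2

lemma exists_path_in_set (ha : T.IsAcyclic) {S : Set ι} (hS : (T.induce S).Connected)
    {i j : ι} (hi : i ∈ S) (hj : j ∈ S) :
    ∃ p : T.Walk i j, p.IsPath ∧ ∀ x ∈ p.support, x ∈ S := by
  classical
  obtain ⟨q⟩ := hS.preconnected ⟨i, hi⟩ ⟨j, hj⟩
  refine ⟨(q.map (SimpleGraph.Embedding.induce S).toHom).bypass,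
    SimpleGraph.Walk.bypass_isPath _, ?_⟩
  intro x hx
  have hx' := SimpleGraph.Walk.support_bypass_subset _ hx
  erw [SimpleGraph.Walk.support_map] at hx'
  obtain ⟨y, _, rfl⟩ := List.mem_map.mp hx'
  exact y.2

lemma path_support_in_set (ha : T.IsAcyclic) {S : Set ι} (hS : (T.induce S).Connected)
    {i j : ι} (hi : i ∈ S) (hj : j ∈ S) (p : T.Walk i j) (hp : p.IsPath) :
    ∀ x ∈ p.support, x ∈ S := by
  obtain ⟨q, hq, hqS⟩ := exists_path_in_set ha hS hi hj
  have hpq : p = q := Subtype.ext_iff.mp (ha.path_unique ⟨p, hp⟩ ⟨q, hq⟩)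
  rw [hpq]
  exact hqS

lemma mem_support_of_min (hc : T.Connected) (ha : T.IsAcyclic) {S : Set ι}
    (hS : (T.induce S).Connected) (r : ι) {j i0 : ι} (hj : j ∈ S) (hi0 : i0 ∈ S)
    (hmin : ∀ k ∈ S, T.dist r i0 ≤ T.dist r k)
    {p : T.Walk r j} (hp : p.IsPath) : i0 ∈ p.support := by
  classical
  obtain ⟨w1, hw1⟩ := hc.exists_walk_length_eq_dist r i0
  obtain ⟨P2, hP2, hP2S⟩ := exists_path_in_set ha hS hi0 hj
  have hdisj : ∀ x, x ∈ w1.bypass.support → x ∈ P2.support → x = i0 := by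
    intro x hx1 hx2
    by_contra hxne
    have hxS : x ∈ S := hP2S x hx2
    have hx1' : x ∈ w1.support := SimpleGraph.Walk.support_bypass_subset _ hx1
    have h1 : T.dist r x ≤ (w1.takeUntil x hx1').length := SimpleGraph.dist_le _
    have h2 : (w1.takeUntil x hx1').length + (w1.dropUntil x hx1').length = w1.length := by
      have := congrArg SimpleGraph.Walk.length (w1.take_spec hx1')
      rwa [SimpleGraph.Walk.length_append] at this
    have h3 : (w1.dropUntil x hx1').length ≠ 0 := fun h0 =>
      hxne (SimpleGraph.Walk.eq_of_length_eq_zero h0)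
    have h4 := hmin x hxS
    omega
  have happ : (w1.bypass.append P2).IsPath :=
    isPath_append w1.bypass_isPath hP2 hdisj
  have hpq : p = w1.bypass.append P2 :=
    Subtype.ext_iff.mp (ha.path_unique ⟨p, hp⟩ ⟨w1.bypass.append P2, happ⟩)
  rw [hpq, SimpleGraph.Walk.mem_support_append_iff]
  exact Or.inl (SimpleGraph.Walk.end_mem_support _)

lemma key_claim {V : Type} (Bb : ι → Finset V) (hc : T.Connected) (ha : T.IsAcyclic)
    (hconn : ∀ v : V, (T.induce {i | v ∈ Bb i}).Connected)
    (r : ι) {v0 u : V} {i0 i0' j : ι}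
    (hv0i0 : v0 ∈ Bb i0) (hmin0 : ∀ k, v0 ∈ Bb k → T.dist r i0 ≤ T.dist r k)
    (hui0' : u ∈ Bb i0') (hmin' : ∀ k, u ∈ Bb k → T.dist r i0' ≤ T.dist r k)
    (hmax : T.dist r i0' ≤ T.dist r i0)
    (hvj : v0 ∈ Bb j) (huj : u ∈ Bb j) : u ∈ Bb i0 := by
  classical
  obtain ⟨w0, hw0⟩ := hc.exists_walk_length_eq_dist r j
  have hp : w0.bypass.IsPath := w0.bypass_isPath
  have hplen : w0.bypass.length = T.dist r j :=
    le_antisymm (hw0 ▸ w0.length_bypass_le) (SimpleGraph.dist_le _)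
  have hi0p : i0 ∈ w0.bypass.support :=
    mem_support_of_min hc ha (hconn v0) r hvj hv0i0 (fun k hk => hmin0 k hk) hp
  have hi0'p : i0' ∈ w0.bypass.support :=
    mem_support_of_min hc ha (hconn u) r huj hui0' (fun k hk => hmin' k hk) hp
  have hsplit := w0.bypass.take_spec hi0'p
  have hcase : i0 ∈ (w0.bypass.takeUntil i0' hi0'p).support ∨
      i0 ∈ (w0.bypass.dropUntil i0' hi0'p).support := by
    rw [← SimpleGraph.Walk.mem_support_append_iff, hsplit]
    exact hi0p
  rcases hcase with hcase | hcase
  · -- i0 lies on the prefix: then i0 = i0'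
    obtain ⟨w1, hw1⟩ := hc.exists_walk_length_eq_dist r i0'
    have hlen12 : (w0.bypass.takeUntil i0' hi0'p).length +
        (w0.bypass.dropUntil i0' hi0'p).length = w0.bypass.length := by
      have := congrArg SimpleGraph.Walk.length hsplit
      rwa [SimpleGraph.Walk.length_append] at this
    have hdj : T.dist r j ≤ T.dist r i0' + (w0.bypass.dropUntil i0' hi0'p).length := by
      have := SimpleGraph.dist_le (w1.append (w0.bypass.dropUntil i0' hi0'p))
      rwa [SimpleGraph.Walk.length_append, hw1] at this
    have ht1 : T.dist r i0 ≤ ((w0.bypass.takeUntil i0' hi0'p).takeUntil i0 hcase).length :=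
      SimpleGraph.dist_le _
    have ht2 : ((w0.bypass.takeUntil i0' hi0'p).takeUntil i0 hcase).length +
        ((w0.bypass.takeUntil i0' hi0'p).dropUntil i0 hcase).length =
        (w0.bypass.takeUntil i0' hi0'p).length := by
      have := congrArg SimpleGraph.Walk.length ((w0.bypass.takeUntil i0' hi0'p).take_spec hcase)
      rwa [SimpleGraph.Walk.length_append] at this
    have hdrop0 : ((w0.bypass.takeUntil i0' hi0'p).dropUntil i0 hcase).length = 0 := by omega
    have : i0 = i0' := SimpleGraph.Walk.eq_of_length_eq_zero hdrop0
    rw [this]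
    exact hui0'
  · -- i0 lies on the suffix: suffix is within the bags containing u
    have ht2path : (w0.bypass.dropUntil i0' hi0'p).IsPath := hp.dropUntil _
    exact path_support_in_set ha (hconn u) hui0' huj _ ht2path i0 hcase

end TreeLemmas

end TwAux
namespace TwAux

lemma key (n : ℕ) : ∀ (V : Type) [Fintype V] (σ : Sym2 V → Bool) (ι : Type)
    (T : SimpleGraph ι) (Bb : ι → Finset V), Fintype.card V = n → T.Connected →
    T.IsAcyclic → (∀ v, ∃ i, v ∈ Bb i) →
    (∀ v : V, (T.induce {i | v ∈ Bb i}).Connected) →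
    (∀ i, (Bb i).card ≤ 3) →
    ∃ (c : V → Fin 7) (P : V → Bool → Finset (Fin 7)),
      (∀ v, VertInv (c v) (P v)) ∧
      ∀ u w : V, u ≠ w → (∃ i, u ∈ Bb i ∧ w ∈ Bb i) →
        Str (c u) (c w) (P u (σ s(u, w))) (P u (!σ s(u, w)))
          (P w (σ s(u, w))) (P w (!σ s(u, w))) := by
  induction n with
  | zero =>
    intro V instV σ ι T Bb hcardV _ _ _ _ _
    haveI : IsEmpty V := Fintype.card_eq_zero_iff.mp hcardV
    exact ⟨isEmptyElim, isEmptyElim, fun v => isEmptyElim v, fun u => isEmptyElim u⟩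
  | succ n IH =>
    intro V instV σ ι T Bb hcardV hTc hTa hcov hconn hcard
    classical
    haveI hVne : Nonempty V := Fintype.card_pos_iff.mp (by omega)
    obtain ⟨r⟩ := hTc.nonempty
    -- choose, for every vertex, a bag of minimum distance to the root r
    have hsel : ∀ v : V, ∃ i, v ∈ Bb i ∧ ∀ k, v ∈ Bb k → T.dist r i ≤ T.dist r k := by
      intro v
      have hne : {m | ∃ i, v ∈ Bb i ∧ T.dist r i = m}.Nonempty := by
        obtain ⟨i, hi⟩ := hcov v
        exact ⟨T.dist r i, i, hi, rfl⟩
      obtain ⟨i, hi, hieq⟩ := Nat.sInf_mem hne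
      refine ⟨i, hi, fun k hk => ?_⟩
      rw [hieq]
      exact Nat.sInf_le ⟨k, hk, rfl⟩
    choose f hf1 hf2 using hsel
    obtain ⟨v0, -, hmax0⟩ := Finset.exists_max_image Finset.univ
      (fun v => T.dist r (f v)) ⟨Classical.arbitrary V, Finset.mem_univ _⟩
    -- every vertex sharing a bag with v0 is in the bag f v0
    have hclaim : ∀ x : V, x ≠ v0 → (∃ j, v0 ∈ Bb j ∧ x ∈ Bb j) → x ∈ Bb (f v0) := by
      rintro x hx ⟨j, hvj, hxj⟩
      exact key_claim Bb hTc hTa hconn r (hf1 v0) (hf2 v0) (hf1 x) (hf2 x)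
        (hmax0 x (Finset.mem_univ x)) hvj hxj
    -- the restricted decomposition on V' = V \ {v0}
    have hcV' : Fintype.card {w : V // w ≠ v0} = n := by
      rw [Fintype.card_subtype]
      rw [Finset.filter_ne']
      rw [Finset.card_erase_of_mem (Finset.mem_univ v0)]
      rw [Finset.card_univ]
      omega
    have hcov' : ∀ w : {w : V // w ≠ v0}, ∃ i,
        w ∈ (Bb i).subtype (fun y => y ≠ v0) := by
      intro w
      obtain ⟨i, hi⟩ := hcov (w : V)
      exact ⟨i, Finset.mem_subtype.mpr hi⟩
    have hconn' : ∀ w : {w : V // w ≠ v0},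
        (T.induce {i | w ∈ (Bb i).subtype (fun y => y ≠ v0)}).Connected := by
      intro w
      have hset : {i | w ∈ (Bb i).subtype (fun y => y ≠ v0)} = {i | (w : V) ∈ Bb i} := by
        ext i
        simp [Finset.mem_subtype]
      rw [hset]
      exact hconn (w : V)
    have hcard' : ∀ i, ((Bb i).subtype (fun y => y ≠ v0)).card ≤ 3 := by
      intro i
      rw [Finset.card_subtype]
      exact le_trans (Finset.card_filter_le _ _) (hcard i)
    obtain ⟨c', P', hVI', hE'⟩ := IH {w : V // w ≠ v0}
      (fun e => σ (Sym2.map Subtype.val e)) ι T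
      (fun i => (Bb i).subtype (fun y => y ≠ v0)) hcV' hTc hTa hcov' hconn' hcard'
    -- the set of "parents" of v0
    set N : Finset {w : V // w ≠ v0} := (Bb (f v0)).subtype (fun y => y ≠ v0) with hN
    have hNcard : N.card ≤ 2 := by
      have h1 : N.card = ((Bb (f v0)).filter (fun y => y ≠ v0)).card := Finset.card_subtype _ _
      rw [Finset.filter_ne'] at h1
      have h2 := Finset.card_erase_of_mem (hf1 v0)
      have h3 := hcard (f v0)
      omega
    -- obtain the colour data for the new vertex v0
    obtain ⟨cv, Pv, hvi, hstr⟩ :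
        ∃ (cv : Fin 7) (Pv : Bool → Finset (Fin 7)), VertInv cv Pv ∧
          ∀ (x : V) (hx : x ≠ v0), x ∈ Bb (f v0) →
            Str cv (c' ⟨x, hx⟩) (Pv (σ s(v0, x))) (Pv (!σ s(v0, x)))
              (P' ⟨x, hx⟩ (σ s(v0, x))) (P' ⟨x, hx⟩ (!σ s(v0, x))) := by
      have hNc : N.card = 0 ∨ N.card = 1 ∨ N.card = 2 := by omega
      rcases hNc with h0 | h1 | h2
      · obtain ⟨c0, P0, hP0⟩ := STEP0
        refine ⟨c0, P0, hP0, ?_⟩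
        intro x hx hxB
        have : (⟨x, hx⟩ : {w : V // w ≠ v0}) ∈ N := Finset.mem_subtype.mpr hxB
        rw [Finset.card_eq_zero.mp h0] at this
        exact absurd this (Finset.notMem_empty _)
      · obtain ⟨a, hNa⟩ := Finset.card_eq_one.mp h1
        obtain ⟨cv, Pv, hs, hvi⟩ := STEP1 (σ s(v0, (a : V))) (hVI' a)
        refine ⟨cv, Pv, hvi, ?_⟩
        intro x hx hxB
        have hmem : (⟨x, hx⟩ : {w : V // w ≠ v0}) ∈ N := Finset.mem_subtype.mpr hxB
        rw [hNa, Finset.mem_singleton] at hmem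
        rw [← hmem] at hs
        exact hs
      · obtain ⟨a, b, hab, hNab⟩ := Finset.card_eq_two.mp h2
        have haN : a ∈ N := by rw [hNab]; exact Finset.mem_insert_self _ _
        have hbN : b ∈ N := by rw [hNab]; simp
        have hEab := hE' a b hab ⟨f v0, Finset.mem_subtype.mpr (Finset.mem_subtype.mp haN),
          Finset.mem_subtype.mpr (Finset.mem_subtype.mp hbN)⟩
        obtain ⟨cv, Pv, hsa, hsb, hvi⟩ := STEP2 _ (σ s(v0, (a : V))) (σ s(v0, (b : V))) hEab
        refine ⟨cv, Pv, hvi, ?_⟩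
        intro x hx hxB
        have hmem : (⟨x, hx⟩ : {w : V // w ≠ v0}) ∈ N := Finset.mem_subtype.mpr hxB
        rw [hNab] at hmem
        rcases Finset.mem_insert.mp hmem with hmem | hmem
        · rw [← hmem] at hsa
          exact hsa
        · rw [Finset.mem_singleton] at hmem
          rw [← hmem] at hsb
          exact hsb
    -- assemble the colouring of V
    refine ⟨fun x => if hx : x = v0 then cv else c' ⟨x, hx⟩,
            fun x => if hx : x = v0 then Pv else P' ⟨x, hx⟩, ?_, ?_⟩
    · intro v
      by_cases hv : v = v0
      · rw [hv]
        simpa only [dif_pos] using hvi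
      · simpa only [dif_neg hv] using hVI' ⟨v, hv⟩
    · rintro u w hne ⟨i, hui, hwi⟩
      by_cases hu : u = v0
      · have hw : w ≠ v0 := fun h => hne (hu.trans h.symm)
        have hwB : w ∈ Bb (f v0) := hclaim w hw ⟨i, hu ▸ hui, hwi⟩
        have h := hstr w hw hwB
        rw [hu]
        simpa only [dif_pos, dif_neg hw] using h
      · by_cases hw : w = v0
        · have huB : u ∈ Bb (f v0) := hclaim u hu ⟨i, hw ▸ hwi, hui⟩
          have h := (hstr u hu huB).swap
          have hsw : (s(v0, u) : Sym2 V) = s(u, v0) := Sym2.eq_swap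
          rw [hsw] at h
          rw [hw]
          simpa only [dif_neg hu, dif_pos] using h
        · have hne' : (⟨u, hu⟩ : {w : V // w ≠ v0}) ≠ ⟨w, hw⟩ :=
            fun h => hne (congrArg Subtype.val h)
          have h := hE' ⟨u, hu⟩ ⟨w, hw⟩ hne'
            ⟨i, Finset.mem_subtype.mpr hui, Finset.mem_subtype.mpr hwi⟩
          simp only [Sym2.map_pair_eq] at h
          simpa only [dif_neg hu, dif_neg hw] using h

lemma walk_length_two {V : Type} {G : SimpleGraph V} {x y : V} (p : G.Walk x y)
    (h : p.length = 2) :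
    ∃ (m : V) (h1 : G.Adj x m) (h2 : G.Adj m y),
      p = SimpleGraph.Walk.cons h1 (SimpleGraph.Walk.cons h2 SimpleGraph.Walk.nil) := by
  cases p with
  | nil => simp at h
  | cons h1 q =>
    cases q with
    | nil => simp at h
    | cons h2 q2 =>
      cases q2 with
      | nil => exact ⟨_, h1, h2, rfl⟩
      | cons h3 q3 =>
        exfalso
        simp only [SimpleGraph.Walk.length_cons] at h
        omega

end TwAux

theorem treewidth_two_strong_exact_dist_two_chromatic_le_seven
    {V : Type} [Fintype V] (G : SimpleGraph V) (σ : Sym2 V → Bool)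
    (htw : HasTreewidthLE G 2) :
    (G ⊔ strongExactDistNeg G σ 2).chromaticNumber ≤ 7 := by
  classical
  obtain ⟨ι, T, Bb, hTc, hTa, hcov, hedge, hconn, hcard⟩ := htw
  obtain ⟨c, P, hVI, hE⟩ := TwAux.key (Fintype.card V) V σ ι T Bb rfl hTc hTa hcov hconn
    (fun i => by simpa using hcard i)
  have keyNe : ∀ x y : V,
      (∃ p : G.Walk x y, p.IsPath ∧ p.length = 2 ∧ IsNegWalk σ p) → c x ≠ c y := by
    rintro x y ⟨p, hp, hlen, hneg⟩
    obtain ⟨m, h1, h2, rfl⟩ := TwAux.walk_length_two p hlen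
    obtain ⟨i1, hi1x, hi1m⟩ := hedge x m h1
    obtain ⟨i2, hi2m, hi2y⟩ := hedge m y h2
    have hsx := hE m x h1.ne' ⟨i1, hi1m, hi1x⟩
    have hsy := hE m y h2.ne ⟨i2, hi2m, hi2y⟩
    have hmx : c x ∈ P m (σ s(m, x)) := TwAux.Str.mem_A hsx
    have hmy : c y ∈ P m (σ s(m, y)) := TwAux.Str.mem_A hsy
    have hdisj : Disjoint (P m true) (P m false) := TwAux.VertInv.disjoint (hVI m)
    have hsw : (s(m, x) : Sym2 V) = s(x, m) := Sym2.eq_swap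
    rw [hsw] at hmx
    have hedges : (SimpleGraph.Walk.cons h1 (SimpleGraph.Walk.cons h2
        SimpleGraph.Walk.nil)).edges = [s(x, m), s(m, y)] := by
      simp [SimpleGraph.Walk.edges_cons, SimpleGraph.Walk.edges_nil]
    unfold IsNegWalk negCount at hneg
    rw [hedges] at hneg
    cases hb1 : σ s(x, m) <;> cases hb2 : σ s(m, y)
    · exfalso
      simp [hb1, hb2, Nat.odd_iff] at hneg
    · rw [hb1] at hmx
      rw [hb2] at hmy
      intro heq
      exact (Finset.disjoint_left.mp hdisj hmy) (heq ▸ hmx)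
    · rw [hb1] at hmx
      rw [hb2] at hmy
      intro heq
      exact (Finset.disjoint_left.mp hdisj hmx) (heq.symm ▸ hmy)
    · exfalso
      simp [hb1, hb2, Nat.odd_iff] at hneg
  have hcolor : (G ⊔ strongExactDistNeg G σ 2).Colorable 7 := by
    refine ⟨SimpleGraph.Coloring.mk c ?_⟩
    intro v w hadj
    rcases hadj with hG | hD
    · exact (hE v w hG.ne (hedge v w hG)).ne
    · rw [strongExactDistNeg, SimpleGraph.fromRel_adj] at hD
      obtain ⟨hne, h | h⟩ := hD
      · obtain ⟨-, p, hp, hl, hn⟩ := h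
        exact keyNe v w ⟨p, hp, hl, hn⟩
      · obtain ⟨-, p, hp, hl, hn⟩ := h
        exact (keyNe w v ⟨p, hp, hl, hn⟩).symm
  have h7 := hcolor.chromaticNumber_le
  exact le_trans h7 (by norm_num)
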